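/- Let Γ ⊂ Aut(Δ) act freely and suppose the universal covering map is injective on the horoball D_{1/N}(1-1/N) (i.e., Γ does not identify distinct points of D_{1/N}(1-1/N)). Then for every z ∈ D_{1/n}(1-1/n) with n > N and every γ ∈ Γ \ {id}, the Möbius distance satisfies d_M(z, γ(z)) ≥ M(N,n) := (n(2-1/n)/(N(2-1/N)) - 1) / (n(2-1/n)/(N(2-1/N)) + 1). -/

import Mathlib

open Metric Set Complex

/-- The Möbius (pseudo-hyperbolic) distance on the unit disk. -/
noncomputable def dM (a b : ℂ) : ℝ := ‖(a - b) / (1 - (starRingEnd ℂ) b * a)‖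

lemma real_key (pz pw qz qw A B : ℝ) (hpz : 0 ≤ pz) (hpw : 0 ≤ pw)
    (hqz : 0 ≤ qz) (hqw : 0 ≤ qw) (hA : 0 ≤ A) (hB : 0 ≤ B)
    (hAB : A ^ 2 - B ^ 2 = pz * pw)
    (hs : (pz * qw + pw * qz) ^ 2 ≤ 4 * A ^ 2 * (qz * qw)) :
    pz * qw * (A - B) ≤ pw * qz * (A + B) := by
  rcases le_or_gt (pz * qw - pw * qz) 0 with h | h
  · nlinarith [mul_nonneg (mul_nonneg hpw hqz) hB, mul_nonneg (mul_nonneg hpz hqw) hB,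
      mul_nonneg (mul_nonneg hpw hqz) hA]
  · have h2 : (A ^ 2 - B ^ 2) * (pz * qw + pw * qz) ^ 2
        = pz * pw * (pz * qw + pw * qz) ^ 2 := by rw [hAB]
    have h1 : 0 ≤ pz * pw * (4 * A ^ 2 * (qz * qw) - (pz * qw + pw * qz) ^ 2) :=
      mul_nonneg (mul_nonneg hpz hpw) (by linarith)
    have hsq : ((pz * qw - pw * qz) * A) ^ 2 ≤ ((pz * qw + pw * qz) * B) ^ 2 := by
      nlinarith [h1, h2]
    have hx : 0 ≤ (pz * qw - pw * qz) * A := mul_nonneg h.le hA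
    have hy : 0 ≤ (pz * qw + pw * qz) * B := by positivity
    nlinarith [hsq, hx, hy]

lemma key_ineq (z w : ℂ) (hz : normSq z ≤ 1) (hw : normSq w ≤ 1) :
    (1 - normSq z) * normSq (1 - w) *
        (‖1 - (starRingEnd ℂ) w * z‖ - ‖z - w‖) ≤
      (1 - normSq w) * normSq (1 - z) *
        (‖1 - (starRingEnd ℂ) w * z‖ + ‖z - w‖) := by
  set A := ‖1 - (starRingEnd ℂ) w * z‖ with hA
  set B := ‖z - w‖ with hB
  set E := (1 - (starRingEnd ℂ) w * z) * (1 - (starRingEnd ℂ) z) * (1 - w) with hEdef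
  have hAB : A ^ 2 - B ^ 2 = (1 - normSq z) * (1 - normSq w) := by
    rw [hA, hB, Complex.sq_norm, Complex.sq_norm]
    simp [Complex.normSq_apply, Complex.mul_re, Complex.mul_im, Complex.sub_re,
      Complex.sub_im, Complex.one_re, Complex.one_im]
    ring
  have hE : (1 - normSq z) * normSq (1 - w) + (1 - normSq w) * normSq (1 - z)
      = 2 * E.re := by
    rw [hEdef]
    simp [Complex.normSq_apply, Complex.mul_re, Complex.mul_im, Complex.sub_re,
      Complex.sub_im, Complex.one_re, Complex.one_im]
    ring
  have hEabs : E.re ^ 2 ≤ A ^ 2 * (normSq (1 - z) * normSq (1 - w)) := by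
    have h1 : ‖E‖ ^ 2 = normSq E := Complex.sq_norm _
    have h2 : |E.re| ≤ ‖E‖ := Complex.abs_re_le_norm E
    have h3 : normSq E = normSq (1 - (starRingEnd ℂ) w * z) *
        normSq (1 - (starRingEnd ℂ) z) * normSq (1 - w) := by
      rw [hEdef]; simp [Complex.normSq_mul]
    have h4 : normSq (1 - (starRingEnd ℂ) z) = normSq (1 - z) := by
      have he : (1 - (starRingEnd ℂ) z) = (starRingEnd ℂ) (1 - z) := by simp
      rw [he, Complex.normSq_conj]
    have h5 : A ^ 2 = normSq (1 - (starRingEnd ℂ) w * z) := Complex.sq_norm _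
    calc E.re ^ 2 = |E.re| ^ 2 := (_root_.sq_abs _).symm
      _ ≤ ‖E‖ ^ 2 := by
          exact pow_le_pow_left₀ (abs_nonneg _) h2 2
      _ = A ^ 2 * (normSq (1 - z) * normSq (1 - w)) := by
          rw [h1, h3, h4, h5]; ring
  have hs : ((1 - normSq z) * normSq (1 - w) + (1 - normSq w) * normSq (1 - z)) ^ 2
      ≤ 4 * A ^ 2 * (normSq (1 - z) * normSq (1 - w)) := by
    rw [hE]; nlinarith [hEabs]
  exact real_key _ _ _ _ A B (by linarith) (by linarith) (normSq_nonneg _) (normSq_nonneg _)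
    (norm_nonneg _) (norm_nonneg _) hAB hs

lemma horo_iff (k : ℝ) (hk : 0 < k) (z : ℂ) :
    z ∈ Metric.ball (((1 - 1 / k : ℝ)) : ℂ) (1 / k) ↔
      (k - 1) * normSq (1 - z) < 1 - normSq z := by
  rw [Metric.mem_ball, Complex.dist_eq]
  have hk' : k ≠ 0 := hk.ne'
  have e : k * ((k - 1) * normSq (1 - z) - (1 - normSq z))
      = k ^ 2 * normSq (z - (((1 - 1 / k : ℝ)) : ℂ)) - 1 := by
    simp only [Complex.normSq_apply, Complex.sub_re, Complex.sub_im, Complex.one_re,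
      Complex.one_im, Complex.ofReal_re, Complex.ofReal_im]
    field_simp
    ring
  constructor
  · intro h
    have h2 : normSq (z - (((1 - 1 / k : ℝ)) : ℂ)) < (1 / k) ^ 2 := by
      rw [← Complex.sq_norm]
      exact pow_lt_pow_left₀ h (norm_nonneg _) (by norm_num)
    have h3 : k ^ 2 * normSq (z - (((1 - 1 / k : ℝ)) : ℂ)) < 1 := by
      have := mul_lt_mul_of_pos_left h2 (show (0:ℝ) < k ^ 2 by positivity)
      calc k ^ 2 * normSq (z - (((1 - 1 / k : ℝ)) : ℂ)) < k ^ 2 * (1/k)^2 := this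
        _ = 1 := by field_simp
    nlinarith [e]
  · intro h
    have h3 : k ^ 2 * normSq (z - (((1 - 1 / k : ℝ)) : ℂ)) < 1 := by nlinarith [e]
    have h2 : normSq (z - (((1 - 1 / k : ℝ)) : ℂ)) < (1 / k) ^ 2 := by
      rw [div_pow, one_pow, lt_div_iff₀ (by positivity : (0:ℝ) < k ^ 2)]
      linarith [h3]
    have := Complex.sq_norm (z - (((1 - 1 / k : ℝ)) : ℂ))
    nlinarith [norm_nonneg (z - (((1 - 1 / k : ℝ)) : ℂ)),
      (show (0:ℝ) < 1 / k by positivity)]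

lemma final_arith (pz pw qz qw A B nr Nr : ℝ) (hpz : 0 < pz) (hqz : 0 < qz) (hqw : 0 < qw)
    (hpw : 0 ≤ pw) (hA : 0 < A) (hB : 0 ≤ B) (hNr : 1 ≤ Nr) (hnN : Nr + 1 ≤ nr)
    (hzn : (nr - 1) * qz < pz) (hwN : pw ≤ (Nr - 1) * qw)
    (key : pz * qw * (A - B) ≤ pw * qz * (A + B)) :
    (nr - Nr) * A ≤ (nr + Nr - 1) * B := by
  have e1 : pw * qz ≤ (Nr - 1) * (qw * qz) := by nlinarith [mul_le_mul_of_nonneg_right hwN hqz.le]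
  have e2 : (nr - 1) * (qz * qw) ≤ pz * qw := by
    nlinarith [mul_le_mul_of_nonneg_right hzn.le hqw.le]
  have e3 : (Nr - 1) * (qw * qz) * (2 * nr - 1) ≤ (nr - 1) * (qz * qw) * (2 * Nr - 1) := by
    nlinarith [mul_nonneg (mul_nonneg hqz.le hqw.le) (show (0:ℝ) ≤ nr - Nr by linarith)]
  have c1 : (pw * qz) * (2 * nr - 1) ≤ (pz * qw) * (2 * Nr - 1) := by
    calc (pw * qz) * (2 * nr - 1) ≤ ((Nr - 1) * (qw * qz)) * (2 * nr - 1) :=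
          mul_le_mul_of_nonneg_right e1 (by linarith)
      _ ≤ ((nr - 1) * (qz * qw)) * (2 * Nr - 1) := e3
      _ ≤ (pz * qw) * (2 * Nr - 1) := mul_le_mul_of_nonneg_right e2 (by linarith)
  have c2 : (nr - Nr) * (pz * qw + pw * qz) ≤ (nr + Nr - 1) * (pz * qw - pw * qz) := by
    nlinarith [c1]
  have c3 : (nr - Nr) * A * (pz * qw + pw * qz) ≤ (nr + Nr - 1) * B * (pz * qw + pw * qz) := by
    nlinarith [mul_le_mul_of_nonneg_right c2 hA.le,
      mul_le_mul_of_nonneg_left key (show (0:ℝ) ≤ nr + Nr - 1 by linarith)]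
  have hv : 0 < pz * qw + pw * qz := by
    have : 0 < pz * qw := mul_pos hpz hqw
    nlinarith [mul_nonneg hpw hqz.le]
  exact le_of_mul_le_mul_right c3 hv

theorem stmt_16 (S : Set (ℂ → ℂ)) (N n : ℕ) (hN : 0 < N) (hn : N < n)
    (hSmap : ∀ γ ∈ S, Set.MapsTo γ (Metric.ball (0 : ℂ) 1) (Metric.ball (0 : ℂ) 1))
    (hSiso : ∀ γ ∈ S, ∀ a ∈ Metric.ball (0 : ℂ) 1, ∀ b ∈ Metric.ball (0 : ℂ) 1,
      dM (γ a) (γ b) = dM a b)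
    (hnoid : ∀ γ ∈ S, γ ≠ id →
      ∀ u ∈ Metric.ball (((1 - 1 / (N : ℝ) : ℝ)) : ℂ) (1 / (N : ℝ)),
      ∀ v ∈ Metric.ball (((1 - 1 / (N : ℝ) : ℝ)) : ℂ) (1 / (N : ℝ)), γ u ≠ v) :
    ∀ z ∈ Metric.ball (((1 - 1 / (n : ℝ) : ℝ)) : ℂ) (1 / (n : ℝ)), ∀ γ ∈ S, γ ≠ id →
      (((n : ℝ) * (2 - 1 / (n : ℝ))) / ((N : ℝ) * (2 - 1 / (N : ℝ))) - 1) /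
          (((n : ℝ) * (2 - 1 / (n : ℝ))) / ((N : ℝ) * (2 - 1 / (N : ℝ))) + 1) ≤
        dM z (γ z) := by
  intro z hz γ hγS hγid
  set nr : ℝ := (n : ℝ) with hnr
  set Nr : ℝ := (N : ℝ) with hNr
  have hNr1 : 1 ≤ Nr := by rw [hNr]; exact_mod_cast hN
  have hnN : Nr + 1 ≤ nr := by
    rw [hNr, hnr]; exact_mod_cast Nat.succ_le_of_lt hn
  have hnr2 : 2 ≤ nr := by linarith
  have hnrpos : (0:ℝ) < nr := by linarith
  have hNrpos : (0:ℝ) < Nr := by linarith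
  -- z strictly inside the small horoball
  have hzn : (nr - 1) * normSq (1 - z) < 1 - normSq z := (horo_iff nr hnrpos z).mp hz
  -- z is in the unit disk
  have habsz : ‖z‖ < 1 := by
    have h1 : ‖z‖ ≤ ‖z - (((1 - 1 / nr : ℝ)) : ℂ)‖ +
        ‖(((1 - 1 / nr : ℝ)) : ℂ)‖ := by
      calc ‖z‖ = ‖(z - (((1 - 1 / nr : ℝ)) : ℂ)) +
            (((1 - 1 / nr : ℝ)) : ℂ)‖ := by ring_nf
        _ ≤ _ := norm_add_le _ _
    have h2 : ‖(((1 - 1 / nr : ℝ)) : ℂ)‖ = 1 - 1 / nr := by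
      rw [Complex.norm_real, Real.norm_eq_abs, _root_.abs_of_nonneg]
      have : 1 / nr ≤ 1 / 2 := by
        apply one_div_le_one_div_of_le <;> linarith
      linarith
    have h3 : ‖z - (((1 - 1 / nr : ℝ)) : ℂ)‖ < 1 / nr := by
      rw [Metric.mem_ball, Complex.dist_eq] at hz; exact hz
    linarith
  have hnsz : normSq z < 1 := by
    rw [← Complex.sq_norm]; nlinarith [norm_nonneg z]
  -- z in the big horoball
  have hzN : z ∈ Metric.ball (((1 - 1 / Nr : ℝ)) : ℂ) (1 / Nr) := by
    rw [horo_iff Nr hNrpos z]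
    nlinarith [normSq_nonneg (1 - z)]
  -- γ z not in big horoball
  set w : ℂ := γ z with hwdef
  have hwout : w ∉ Metric.ball (((1 - 1 / Nr : ℝ)) : ℂ) (1 / Nr) := by
    intro hcon
    exact hnoid γ hγS hγid z hzN w hcon rfl
  have hwN : 1 - normSq w ≤ (Nr - 1) * normSq (1 - w) := by
    have := (horo_iff Nr hNrpos w).not.mp hwout
    push_neg at this
    linarith
  -- w in unit disk
  have habsw : ‖w‖ < 1 := by
    have hz0 : z ∈ Metric.ball (0 : ℂ) 1 := by
      rw [Metric.mem_ball, Complex.dist_eq, sub_zero]; exact habsz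
    have := hSmap γ hγS hz0
    rw [Metric.mem_ball, Complex.dist_eq, sub_zero] at this; exact this
  have hnsw : normSq w < 1 := by
    rw [← Complex.sq_norm]; nlinarith [norm_nonneg w]
  -- positivity facts
  have hz1 : z ≠ 1 := by intro h; rw [h] at habsz; simp at habsz
  have hw1 : w ≠ 1 := by intro h; rw [h] at habsw; simp at habsw
  have hqz : 0 < normSq (1 - z) := normSq_pos.mpr (sub_ne_zero.mpr (Ne.symm hz1))
  have hqw : 0 < normSq (1 - w) := normSq_pos.mpr (sub_ne_zero.mpr (Ne.symm hw1))
  have hApos : 0 < ‖1 - (starRingEnd ℂ) w * z‖ := by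
    rw [norm_pos_iff]
    intro h0
    have h1 : (starRingEnd ℂ) w * z = 1 := by
      have := sub_eq_zero.mp h0; exact this.symm
    have h2 : ‖(starRingEnd ℂ) w * z‖ = 1 := by rw [h1]; simp
    rw [norm_mul, Complex.norm_conj] at h2
    nlinarith [norm_nonneg w, norm_nonneg z]
  have key := key_ineq z w hnsz.le hnsw.le
  -- main real inequality
  have main : (nr - Nr) * ‖1 - (starRingEnd ℂ) w * z‖ ≤
      (nr + Nr - 1) * ‖z - w‖ :=
    final_arith (1 - normSq z) (1 - normSq w) (normSq (1 - z)) (normSq (1 - w))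
      (‖1 - (starRingEnd ℂ) w * z‖) (‖z - w‖)
      nr Nr (by linarith) hqz hqw (by linarith) hApos (norm_nonneg _)
      hNr1 hnN hzn hwN key
  -- rewrite the goal constant
  have hconst : ((nr * (2 - 1 / nr)) / (Nr * (2 - 1 / Nr)) - 1) /
      ((nr * (2 - 1 / nr)) / (Nr * (2 - 1 / Nr)) + 1) = (nr - Nr) / (nr + Nr - 1) := by
    have h1 : Nr * (2 - 1 / Nr) = 2 * Nr - 1 := by field_simp
    have h2 : nr * (2 - 1 / nr) = 2 * nr - 1 := by field_simp
    rw [h1, h2]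
    have hd1 : (2 * nr - 1) / (2 * Nr - 1) + 1 ≠ 0 := by
      have : (0:ℝ) < (2 * nr - 1) / (2 * Nr - 1) := div_pos (by linarith) (by linarith)
      linarith
    rw [div_eq_div_iff hd1 (by linarith : nr + Nr - 1 ≠ 0)]
    have hz0 : (2 * Nr - 1) ≠ 0 := by linarith
    field_simp [hz0]
    ring
  have hdM : dM z w = ‖z - w‖ / ‖1 - (starRingEnd ℂ) w * z‖ := by
    rw [dM, norm_div]
  rw [hdM, hconst, div_le_div_iff₀ (by linarith) hApos]
  linarith [main]
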